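/- Let $\theta_1, \theta_2 > 0$ with $\theta_2 > 2\theta_1$, let $\mathbf{v}_1, \mathbf{v}_2 \in \mathbb{R}^3$ and $\rho_1 > 0$ be arbitrary. Then there exists $\bar{\rho} > 0$ such that for every $\rho_2 \in (0, \bar{\rho}]$, the bimodal distribution $f(\mathbf{c}) = \frac{\rho_1}{(2\pi\theta_1)^{3/2}} e^{-|\mathbf{c}-\mathbf{v}_1|^2/(2\theta_1)} + \frac{\rho_2}{(2\pi\theta_2)^{3/2}} e^{-|\mathbf{c}-\mathbf{v}_2|^2/(2\theta_2)}$ has temperature $\theta = \frac{\rho_1\theta_1 + \rho_2\theta_2}{\rho_1+\rho_2} + \frac{\rho_1\rho_2|\mathbf{v}_1-\mathbf{v}_2|^2}{3(\rho_1+\rho_2)^2}$ satisfying $2\theta < \theta_2$, and consequently $\int_{\mathbb{R}^3} f(\mathbf{c})^2 \exp\!\big(\tfrac{|\mathbf{c}-\mathbf{v}|^2}{2\theta}\big)\,d\mathbf{c} = \infty$, where $\mathbf{v} = \frac{\rho_1\mathbf{v}_1 + \rho_2\mathbf{v}_2}{\rho_1+\rho_2}$; i.e., the Grad expansion of $f$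 around its own local Maxwellian diverges. -/

import Mathlib

open MeasureTheory

lemma pi3_volume_univ : (volume (Set.univ : Set (Fin 3 → ℝ))) = ⊤ := by
  rw [← Set.pi_univ Set.univ, volume_pi_pi]
  simp [Real.volume_univ]

lemma sum_sq_shift (t : ℝ) (ht : 0 < t) (x y : Fin 3 → ℝ) :
    (∑ i, (x i + y i) ^ 2) ≤ (1 + t) * ∑ i, (x i) ^ 2 + (1 + 1/t) * ∑ i, (y i) ^ 2 := by
  rw [Finset.mul_sum, Finset.mul_sum, ← Finset.sum_add_distrib]
  refine Finset.sum_le_sum fun i _ => ?_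
  have key : 2 * (x i) * (y i) - t * (x i) ^ 2 ≤ y i ^ 2 * (1/t) := by
    rw [mul_one_div, le_div_iff₀ ht]
    nlinarith [sq_nonneg (t * x i - y i)]
  nlinarith [key]

/-- **Divergence of the Grad expansion for bimodal distributions.** If `θ₂ > 2θ₁`, then for
any `v₁, v₂` and `ρ₁ > 0` one can choose `ρ₂` so small that the bimodal distribution has
temperature `θ` with `2θ < θ₂`, and consequently `∫ f² exp(|c-v|²/(2θ)) dc = ∞`, i.e. the
Grad expansion of `f` around its own local Maxwellian diverges. -/
theorem bimodal_grad_divergence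
    (θ1 θ2 ρ1 : ℝ) (hθ1 : 0 < θ1) (hθ2 : 0 < θ2) (h2θ : 2 * θ1 < θ2) (hρ1 : 0 < ρ1)
    (v1 v2 : Fin 3 → ℝ) :
    ∃ ρbar > (0 : ℝ), ∀ ρ2 : ℝ, 0 < ρ2 → ρ2 ≤ ρbar →
      ∀ (f : (Fin 3 → ℝ) → ℝ) (v : Fin 3 → ℝ) (θ : ℝ),
        (∀ c, f c =
            ρ1 / (2 * Real.pi * θ1) ^ ((3 : ℝ) / 2) *
              Real.exp (-(∑ i, (c i - v1 i) ^ 2) / (2 * θ1)) +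
            ρ2 / (2 * Real.pi * θ2) ^ ((3 : ℝ) / 2) *
              Real.exp (-(∑ i, (c i - v2 i) ^ 2) / (2 * θ2))) →
        v = (ρ1 + ρ2)⁻¹ • (ρ1 • v1 + ρ2 • v2) →
        θ = (ρ1 * θ1 + ρ2 * θ2) / (ρ1 + ρ2) +
              ρ1 * ρ2 * (∑ i, (v1 i - v2 i) ^ 2) / (3 * (ρ1 + ρ2) ^ 2) →
        2 * θ < θ2 ∧
        (∫⁻ c : Fin 3 → ℝ,
            ENNReal.ofReal (f c ^ 2 *
              Real.exp ((∑ i, (c i - v i) ^ 2) / (2 * θ)))) = ⊤ := by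
  obtain ⟨D, hDdef⟩ : ∃ D : ℝ, D = ∑ i, (v1 i - v2 i) ^ 2 := ⟨_, rfl⟩
  have hD0 : 0 ≤ D := hDdef ▸ Finset.sum_nonneg fun i _ => sq_nonneg _
  obtain ⟨ε, hεdef⟩ : ∃ ε : ℝ, ε = θ2 - 2 * θ1 := ⟨_, rfl⟩
  have hε : 0 < ε := by rw [hεdef]; linarith
  have hM : (0:ℝ) < 4 * (θ2 - θ1) + 2 * D + 1 := by nlinarith
  refine ⟨ρ1 * ε / (4 * (θ2 - θ1) + 2 * D + 1),
    div_pos (mul_pos hρ1 hε) hM, ?_⟩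
  intro ρ2 hρ2 hρ2le f v θ hf hv hθ
  have hsum : 0 < ρ1 + ρ2 := by linarith
  have hρ2M : ρ2 * (4 * (θ2 - θ1) + 2 * D + 1) ≤ ρ1 * ε := (le_div_iff₀ hM).mp hρ2le
  rw [← hDdef] at hθ
  -- the temperature identity with cleared denominators
  have hθid : θ * (3 * (ρ1 + ρ2) ^ 2) =
      3 * (ρ1 + ρ2) * (ρ1 * θ1 + ρ2 * θ2) + ρ1 * ρ2 * D := by
    rw [hθ]; field_simp
  have hX : (0:ℝ) < 3 * (ρ1 + ρ2) ^ 2 := by positivity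
  have hθpos : 0 < θ := by
    have h1 : 0 < 3 * (ρ1 + ρ2) * (ρ1 * θ1 + ρ2 * θ2) + ρ1 * ρ2 * D := by
      nlinarith [mul_pos hsum (mul_pos hρ1 hθ1),
        mul_nonneg hsum.le (mul_nonneg hρ2.le hθ2.le),
        mul_nonneg (mul_nonneg hρ1.le hρ2.le) hD0]
    have h2 : θ = (3 * (ρ1 + ρ2) * (ρ1 * θ1 + ρ2 * θ2) + ρ1 * ρ2 * D)
        / (3 * (ρ1 + ρ2) ^ 2) := by
      rw [← hθid]; field_simp
    rw [h2]; exact div_pos h1 hX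
  have h2θθ2 : 2 * θ < θ2 := by
    have key : (2 * θ) * (3 * (ρ1 + ρ2) ^ 2) < θ2 * (3 * (ρ1 + ρ2) ^ 2) := by
      have h' : (2 * θ) * (3 * (ρ1 + ρ2) ^ 2)
          = 2 * (3 * (ρ1 + ρ2) * (ρ1 * θ1 + ρ2 * θ2) + ρ1 * ρ2 * D) := by
        rw [show (2 * θ) * (3 * (ρ1 + ρ2) ^ 2) = 2 * (θ * (3 * (ρ1 + ρ2) ^ 2)) by ring,
          hθid]
      rw [h']
      have hmul := mul_le_mul_of_nonneg_left hρ2M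
        (show (0:ℝ) ≤ 3 * (ρ1 + ρ2) by linarith)
      nlinarith [hεdef, mul_pos hρ1 hρ2,
        mul_nonneg (mul_nonneg hρ1.le hρ2.le) hD0,
        mul_nonneg (mul_nonneg hρ2.le hρ2.le) hD0,
        mul_nonneg (mul_nonneg hρ1.le hρ2.le) hθ1.le,
        mul_nonneg (mul_nonneg hρ2.le hρ2.le) hθ1.le,
        mul_nonneg (mul_nonneg hρ1.le hρ2.le) hε.le,
        mul_nonneg (mul_nonneg hρ2.le hρ2.le) hε.le,
        mul_nonneg (mul_nonneg hρ2.le hρ2.le) hθ2.le]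
    exact lt_of_mul_lt_mul_right key hX.le
  refine ⟨h2θθ2, ?_⟩
  -- notation
  obtain ⟨C, hCdef⟩ : ∃ C : ℝ, C = ρ2 / (2 * Real.pi * θ2) ^ ((3 : ℝ) / 2) := ⟨_, rfl⟩
  have hC : 0 < C := by
    rw [hCdef]
    have : (0:ℝ) < (2 * Real.pi * θ2) ^ ((3 : ℝ) / 2) :=
      Real.rpow_pos_of_pos (by positivity) _
    positivity
  obtain ⟨u, hudef⟩ : ∃ u : ℝ, u = (2 * θ)⁻¹ := ⟨_, rfl⟩
  obtain ⟨w, hwdef⟩ : ∃ w : ℝ, w = θ2⁻¹ := ⟨_, rfl⟩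
  have hu : 0 < u := by rw [hudef]; positivity
  have hw : 0 < w := by rw [hwdef]; positivity
  have huw : w < u := by
    rw [hudef, hwdef]
    exact (inv_lt_inv₀ hθ2 (by linarith)).mpr h2θθ2
  obtain ⟨t, htdef⟩ : ∃ t : ℝ, t = (u - w) / (2 * w) := ⟨_, rfl⟩
  have ht : 0 < t := htdef ▸ div_pos (by linarith) (by linarith)
  obtain ⟨W, hWdef⟩ : ∃ W : ℝ, W = ∑ i, (v i - v2 i) ^ 2 := ⟨_, rfl⟩
  have hW0 : 0 ≤ W := hWdef ▸ Finset.sum_nonneg fun i _ => sq_nonneg _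
  obtain ⟨q, hqdef⟩ : ∃ q : ℝ, q = (1 + 1/t) * W * w := ⟨_, rfl⟩
  have hq0 : 0 ≤ q := by
    rw [hqdef]
    have h1 : (0:ℝ) ≤ 1 + 1/t := by positivity
    positivity
  obtain ⟨R2, hR2def⟩ : ∃ R2 : ℝ, R2 = 2 * q / (u - w) := ⟨_, rfl⟩
  have hR20 : 0 ≤ R2 := hR2def ▸ div_nonneg (by linarith) (by linarith)
  set T : Set (Fin 3 → ℝ) := {c | R2 ≤ ∑ i, (c i - v i) ^ 2} with hTdef
  have hTmeas : MeasurableSet T := by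
    apply measurableSet_le measurable_const
    exact Finset.measurable_sum _ fun i _ =>
      ((measurable_pi_apply i).sub measurable_const).pow_const 2
  -- T has infinite volume
  have hTcompl : Tᶜ ⊆ Metric.closedBall v (Real.sqrt R2) := by
    intro c hc
    simp only [hTdef, Set.mem_compl_iff, Set.mem_setOf_eq, not_le] at hc
    rw [Metric.mem_closedBall]
    rw [dist_pi_le_iff (Real.sqrt_nonneg _)]
    intro i
    rw [Real.dist_eq, ← Real.sqrt_sq_eq_abs]
    apply Real.sqrt_le_sqrt
    calc (c i - v i) ^ 2
        ≤ ∑ j, (c j - v j) ^ 2 :=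
          Finset.single_le_sum (f := fun j => (c j - v j) ^ 2)
            (fun j _ => sq_nonneg _) (Finset.mem_univ i)
      _ ≤ R2 := hc.le
  have hvolT : volume T = ⊤ := by
    by_contra h
    have h1 : volume Tᶜ < ⊤ :=
      lt_of_le_of_lt (measure_mono hTcompl) measure_closedBall_lt_top
    have h2 := measure_add_measure_compl hTmeas (μ := volume)
    rw [pi3_volume_univ] at h2
    exact (ENNReal.add_ne_top.mpr ⟨h, h1.ne⟩) h2
  -- pointwise bound on T
  have hpt : ∀ c ∈ T, ENNReal.ofReal (C ^ 2) ≤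
      ENNReal.ofReal (f c ^ 2 * Real.exp ((∑ i, (c i - v i) ^ 2) / (2 * θ))) := by
    intro c hc
    apply ENNReal.ofReal_le_ofReal
    obtain ⟨A, hAdef⟩ : ∃ A : ℝ, A = ∑ i, (c i - v i) ^ 2 := ⟨_, rfl⟩
    obtain ⟨B, hBdef⟩ : ∃ B : ℝ, B = ∑ i, (c i - v2 i) ^ 2 := ⟨_, rfl⟩
    have hA0 : 0 ≤ A := hAdef ▸ Finset.sum_nonneg fun i _ => sq_nonneg _
    have hB0 : 0 ≤ B := hBdef ▸ Finset.sum_nonneg fun i _ => sq_nonneg _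
    have hcT : R2 ≤ A := hAdef ▸ hc
    -- bound B in terms of A
    have hBA : B ≤ (1 + t) * A + (1 + 1/t) * W := by
      rw [hAdef, hBdef, hWdef]
      have := sum_sq_shift t ht (fun i => c i - v i) (fun i => v i - v2 i)
      simpa [sub_add_sub_cancel] using this
    -- the exponent is nonneg on T
    have hexp0 : 0 ≤ A * u - B * w := by
      have htw : t * (2 * w) = u - w := by
        rw [htdef]; field_simp
      have h1 : (1 + t) * w = (u + w) / 2 := by linear_combination htw / 2
      have h2 := mul_le_mul_of_nonneg_right hBA hw.le
      have h3 : ((1 + t) * A + (1 + 1/t) * W) * w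
          = A * ((u + w) / 2) + q := by
        linear_combination A * h1 - hqdef
      have h4 : R2 * (u - w) = 2 * q := by
        rw [hR2def, div_mul_cancel₀]
        exact ne_of_gt (by linarith)
      have h5 : B * w ≤ A * ((u + w) / 2) + q := by rw [← h3]; exact h2
      have h6 := mul_le_mul_of_nonneg_right hcT (show (0:ℝ) ≤ (u - w) / 2 by linarith)
      linarith only [h4, h5, h6]
    -- lower bound on f c
    have hfc : C * Real.exp (-B / (2 * θ2)) ≤ f c := by
      rw [hf c]
      have h1 : 0 ≤ ρ1 / (2 * Real.pi * θ1) ^ ((3 : ℝ) / 2) *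
          Real.exp (-(∑ i, (c i - v1 i) ^ 2) / (2 * θ1)) := by
        have : (0:ℝ) < (2 * Real.pi * θ1) ^ ((3 : ℝ) / 2) :=
          Real.rpow_pos_of_pos (by positivity) _
        positivity
      have h2 : C * Real.exp (-B / (2 * θ2)) =
          ρ2 / (2 * Real.pi * θ2) ^ ((3 : ℝ) / 2) *
            Real.exp (-(∑ i, (c i - v2 i) ^ 2) / (2 * θ2)) := by
        rw [hCdef, hBdef]
      linarith only [h1, h2]
    have hfc0 : 0 ≤ C * Real.exp (-B / (2 * θ2)) := by positivity
    have hsq : (C * Real.exp (-B / (2 * θ2))) ^ 2 ≤ f c ^ 2 :=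
      pow_le_pow_left₀ hfc0 hfc 2
    have hsq' : (C * Real.exp (-B / (2 * θ2))) ^ 2 = C ^ 2 * Real.exp (-(B * w)) := by
      rw [mul_pow, sq (Real.exp _), ← Real.exp_add]
      congr 1
      rw [hwdef]
      field_simp
      ring
    have hAeq : (∑ i, (c i - v i) ^ 2) / (2 * θ) = A * u := by
      rw [hAdef, hudef, div_eq_mul_inv]
    calc C ^ 2 = C ^ 2 * 1 := (mul_one _).symm
      _ ≤ C ^ 2 * Real.exp (A * u - B * w) := by
          apply mul_le_mul_of_nonneg_left _ (sq_nonneg C)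
          exact Real.one_le_exp hexp0
      _ = (C ^ 2 * Real.exp (-(B * w))) * Real.exp (A * u) := by
          rw [mul_assoc, ← Real.exp_add]; ring_nf
      _ ≤ f c ^ 2 * Real.exp (A * u) := by
          apply mul_le_mul_of_nonneg_right _ (Real.exp_nonneg _)
          rw [← hsq']; exact hsq
      _ = f c ^ 2 * Real.exp ((∑ i, (c i - v i) ^ 2) / (2 * θ)) := by rw [hAeq]
  -- conclude
  have hge : ENNReal.ofReal (C ^ 2) * volume T ≤
      ∫⁻ c : Fin 3 → ℝ, ENNReal.ofReal (f c ^ 2 *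
        Real.exp ((∑ i, (c i - v i) ^ 2) / (2 * θ))) := by
    rw [← setLIntegral_const T (ENNReal.ofReal (C ^ 2))]
    exact le_trans (setLIntegral_mono' hTmeas hpt) (setLIntegral_le_lintegral T _)
  rw [hvolT, ENNReal.mul_top (by simp only [ne_eq, ENNReal.ofReal_eq_zero, not_le]; positivity)] at hge
  exact top_le_iff.mp hge
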